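/- Every regular function on SL₂(k) (k algebraically closed) that is invariant under left and right translation by U₂ is a polynomial in φ, where φ(a b; c d) = c. That is, k[SL₂]^{U₂×U₂} = k[φ]. -/

import Mathlib

/-- `U₂`: upper unitriangular matrices in `SL₂(k)`. -/
def IsUpperUni {k : Type*} [Field k] (u : Matrix.SpecialLinearGroup (Fin 2) k) : Prop :=
  u.val 0 0 = 1 ∧ u.val 1 0 = 0 ∧ u.val 1 1 = 1

section Aux

variable {k : Type*} [Field k]

/-- Upper unipotent matrix. -/
def BiInvUU (x : k) : Matrix.SpecialLinearGroup (Fin 2) k :=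
  ⟨!![1, x; 0, 1], by simp [Matrix.det_fin_two_of]⟩

lemma isUpperUni_BiInvUU (x : k) : IsUpperUni (BiInvUU x) :=
  ⟨by simp [BiInvUU], by simp [BiInvUU], by simp [BiInvUU]⟩

/-- Lower unipotent matrix. -/
def BiInvLL (c : k) : Matrix.SpecialLinearGroup (Fin 2) k :=
  ⟨!![1, 0; c, 1], by simp [Matrix.det_fin_two_of]⟩

lemma biInv_orbit_eq (g : Matrix.SpecialLinearGroup (Fin 2) k) (hc : g.val 1 0 ≠ 0) :
    BiInvUU ((1 - g.val 0 0) / g.val 1 0) * g * BiInvUU ((1 - g.val 1 1) / g.val 1 0)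
      = BiInvLL (g.val 1 0) := by
  have hdet : g.val 0 0 * g.val 1 1 - g.val 0 1 * g.val 1 0 = 1 := by
    have := g.2; rwa [Matrix.det_fin_two] at this
  apply Subtype.ext
  show (BiInvUU _).val * g.val * (BiInvUU _).val = (BiInvLL _).val
  set a := g.val 0 0
  set b := g.val 0 1
  set c := g.val 1 0
  set d := g.val 1 1
  have e : g.val = !![a, b; c, d] := Matrix.eta_fin_two g.val
  rw [e]
  show !![1, (1-a)/c; 0, 1] * !![a, b; c, d] * !![1, (1-d)/c; 0, 1] = !![1, 0; c, 1]
  rw [Matrix.mul_fin_two, Matrix.mul_fin_two]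
  ext i j
  fin_cases i <;> fin_cases j <;> simp <;> field_simp <;>
    first
      | linear_combination hdet
      | linear_combination (-1 : k) * hdet
      | ring

lemma biInv_eval_aeval (P : MvPolynomial (Fin 2 × Fin 2) k)
    (f : Fin 2 × Fin 2 → Polynomial k) (c : k) :
    Polynomial.eval c (MvPolynomial.aeval f P) =
      MvPolynomial.eval (fun ij => (f ij).eval c) P := by
  have h := MvPolynomial.comp_aeval_apply (f := f) (Polynomial.aeval c) P
  rw [Polynomial.coe_aeval_eq_eval] at h
  rw [h, ← MvPolynomial.coe_aeval_eq_eval]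
  rfl

end Aux

/-- Every regular function on `SL₂(k)` (i.e. a function given by a polynomial in the
matrix entries) that is invariant under left and right translation by `U₂` is a
polynomial in `φ`, where `φ(a b; c d) = c`:  `k[SL₂]^{U₂×U₂} = k[φ]`. -/
theorem bi_invariant_regular_functions {k : Type*} [Field k] [IsAlgClosed k]
    (ψ : Matrix.SpecialLinearGroup (Fin 2) k → k)
    (hreg : ∃ P : MvPolynomial (Fin 2 × Fin 2) k,
      ∀ g : Matrix.SpecialLinearGroup (Fin 2) k,
        ψ g = MvPolynomial.eval (fun ij => g.val ij.1 ij.2) P)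
    (hinv : ∀ u v g : Matrix.SpecialLinearGroup (Fin 2) k,
      IsUpperUni u → IsUpperUni v → ψ (u * g * v) = ψ g) :
    ∃ Q : Polynomial k, ∀ g : Matrix.SpecialLinearGroup (Fin 2) k,
      ψ g = Q.eval (g.val 1 0) := by
  obtain ⟨P, hP⟩ := hreg
  set Q : Polynomial k := MvPolynomial.aeval
      (fun ij => (!![1, 0; Polynomial.X, 1] : Matrix (Fin 2) (Fin 2) (Polynomial k))
        ij.1 ij.2) P with hQdef
  have hQeval : ∀ c : k, Q.eval c = ψ (BiInvLL c) := by
    intro c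
    rw [hQdef, biInv_eval_aeval, hP (BiInvLL c)]
    have hfun : (fun ij : Fin 2 × Fin 2 =>
        Polynomial.eval c ((!![1, 0; Polynomial.X, 1] :
          Matrix (Fin 2) (Fin 2) (Polynomial k)) ij.1 ij.2))
        = fun ij => (BiInvLL c).val ij.1 ij.2 := by
      funext ij
      obtain ⟨i, j⟩ := ij
      fin_cases i <;> fin_cases j <;> simp [BiInvLL]
    rw [hfun]
  have key : ∀ g : Matrix.SpecialLinearGroup (Fin 2) k, g.val 1 0 ≠ 0 →
      ψ g = Q.eval (g.val 1 0) := by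
    intro g hc
    rw [hQeval, ← biInv_orbit_eq g hc]
    exact (hinv _ _ g (isUpperUni_BiInvUU _) (isUpperUni_BiInvUU _)).symm
  refine ⟨Q, fun g => ?_⟩
  by_cases hc : g.val 1 0 = 0
  · -- the case c = 0
    have hdet : g.val 0 0 * g.val 1 1 - g.val 0 1 * g.val 1 0 = 1 := by
      have := g.2; rwa [Matrix.det_fin_two] at this
    set a := g.val 0 0 with ha
    set b := g.val 0 1 with hb
    have had : a * g.val 1 1 = 1 := by
      rw [hc, mul_zero, sub_zero] at hdet; exact hdet
    have ha0 : a ≠ 0 := by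
      intro h; rw [h, zero_mul] at had; exact zero_ne_one had
    have hd : g.val 1 1 = a⁻¹ :=
      eq_inv_of_mul_eq_one_left (by rw [mul_comm]; exact had)
    -- the family of matrices
    have hdetM : ∀ t : k, (!![a, b; t, a⁻¹ + b * a⁻¹ * t]).det = 1 := by
      intro t; rw [Matrix.det_fin_two_of]; field_simp; ring
    set G : k → Matrix.SpecialLinearGroup (Fin 2) k :=
      fun t => ⟨!![a, b; t, a⁻¹ + b * a⁻¹ * t], hdetM t⟩ with hGdef
    set F : Polynomial k := MvPolynomial.aeval
        (fun ij => (!![Polynomial.C a, Polynomial.C b;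
            Polynomial.X, Polynomial.C a⁻¹ + Polynomial.C (b * a⁻¹) * Polynomial.X]
              : Matrix (Fin 2) (Fin 2) (Polynomial k)) ij.1 ij.2) P with hFdef
    have hF : ∀ t : k, F.eval t = ψ (G t) := by
      intro t
      rw [hFdef, biInv_eval_aeval, hP (G t)]
      have hfun : (fun ij : Fin 2 × Fin 2 =>
          Polynomial.eval t ((!![Polynomial.C a, Polynomial.C b;
            Polynomial.X, Polynomial.C a⁻¹ + Polynomial.C (b * a⁻¹) * Polynomial.X]
              : Matrix (Fin 2) (Fin 2) (Polynomial k)) ij.1 ij.2))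
          = fun ij => (G t).val ij.1 ij.2 := by
        funext ij
        obtain ⟨i, j⟩ := ij
        fin_cases i <;> fin_cases j <;> simp [hGdef]
      rw [hfun]
    have hFQ : F = Q := by
      apply Polynomial.eq_of_infinite_eval_eq
      apply Set.Infinite.mono (s := ({0}ᶜ : Set k))
      · intro t ht
        have ht0 : t ≠ 0 := ht
        have h10 : (G t).val 1 0 = t := by simp [hGdef]
        show F.eval t = Q.eval t
        rw [hF t, key (G t) (by rw [h10]; exact ht0), h10]
      · exact (Set.finite_singleton 0).infinite_compl
    have hg : g = G 0 := by
      apply Subtype.ext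
      have e : g.val = !![a, b; g.val 1 0, g.val 1 1] := Matrix.eta_fin_two g.val
      rw [e, hc, hd]
      simp [hGdef]
    have h0 : (G 0).val 1 0 = 0 := by simp [hGdef]
    rw [hg, ← hF 0, hFQ, h0]
  · exact key g hc
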